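/- Let S be a unipotent numerical monoid with |F_l(S)| = 1, where F_l(S) is the left Frobenius set. Then S is irreducible if and only if S is maximal (under inclusion) among unipotent numerical monoids T satisfying F_l(S) ∩ T = ∅. -/
import Mathlib


open Matrix Set Pointwise

/-- The general linear group of `n × n` integer matrices. -/
abbrev GLn (n : ℕ) := Matrix.GeneralLinearGroup (Fin n) ℤ

/-- `A` is an upper unitriangular matrix (the group `U(n)`). -/
def Unitri {n : ℕ} (A : GLn n) : Prop :=
  (∀ i : Fin n, (A : Matrix (Fin n) (Fin n) ℤ) i i = 1) ∧
  ∀ i j : Fin n, j < i → (A : Matrix (Fin n) (Fin n) ℤ) i j = 0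

/-- `G(ℕ)`: the points of the subgroup `G` all of whose entries are natural numbers. -/
def GNat {n : ℕ} (G : Subgroup (GLn n)) : Set (GLn n) :=
  {A | A ∈ G ∧ ∀ i j : Fin n, 0 ≤ (A : Matrix (Fin n) (Fin n) ℤ) i j}

/-- A unipotent numerical monoid in `G`: a finitely generated submonoid of `G(ℕ)`
with finite complement in `G(ℕ)`. -/
def IsUNM {n : ℕ} (G : Subgroup (GLn n)) (S : Set (GLn n)) : Prop :=
  S ⊆ GNat G ∧ (1 : GLn n) ∈ S ∧ (∀ A ∈ S, ∀ B ∈ S, A * B ∈ S) ∧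
  (GNat G \ S).Finite ∧
  ∃ F : Finset (GLn n), (Submonoid.closure (F : Set (GLn n)) : Set (GLn n)) = S

/-- The left Frobenius set `F_l(S) = {A ∈ G(ℕ) : A ∉ S* and A·G(ℕ)* ⊆ S}`. -/
def Fl {n : ℕ} (G : Subgroup (GLn n)) (S : Set (GLn n)) : Set (GLn n) :=
  {A ∈ GNat G | A ∉ S \ ({1} : Set (GLn n)) ∧
    ∀ B ∈ GNat G \ ({1} : Set (GLn n)), A * B ∈ S}

/-- `S` is irreducible: it cannot be written as the intersection of two unipotent
numerical monoids each properly containing it. -/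
def IrredUNM {n : ℕ} (G : Subgroup (GLn n)) (S : Set (GLn n)) : Prop :=
  IsUNM G S ∧ ¬ ∃ T₁ T₂ : Set (GLn n),
    IsUNM G T₁ ∧ IsUNM G T₂ ∧ S ⊂ T₁ ∧ S ⊂ T₂ ∧ T₁ ∩ T₂ = S

lemma GNat.mul_mem' {n : ℕ} {G : Subgroup (GLn n)} {A B : GLn n}
    (hA : A ∈ GNat G) (hB : B ∈ GNat G) : A * B ∈ GNat G := by
  refine ⟨G.mul_mem hA.1 hB.1, fun i j => ?_⟩
  have h : ((A * B : GLn n) : Matrix (Fin n) (Fin n) ℤ)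
      = (A : Matrix (Fin n) (Fin n) ℤ) * (B : Matrix (Fin n) (Fin n) ℤ) := rfl
  rw [h, Matrix.mul_apply]
  exact Finset.sum_nonneg fun k _ => mul_nonneg (hA.2 i k) (hB.2 k j)

/-- If `|F_l(S)| = 1`, then `S` is irreducible if and only if `S` is maximal among
unipotent numerical monoids `T` with `F_l(S) ∩ T = ∅`. -/
theorem irreducible_iff_maximal {n : ℕ} (G : Subgroup (GLn n))
    (hG : ∀ A ∈ G, Unitri A) (S : Set (GLn n)) (hS : IsUNM G S)
    (hF : ∃ A : GLn n, Fl G S = {A}) :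
    IrredUNM G S ↔
      ∀ T : Set (GLn n), IsUNM G T → Fl G S ∩ T = ∅ → S ⊆ T → T = S := by
  classical
  obtain ⟨A, hFA⟩ := hF
  have hAFl : A ∈ Fl G S := by rw [hFA]; exact mem_singleton _
  obtain ⟨hAG, hAnS, hAmul⟩ := hAFl
  constructor
  · rintro ⟨-, hirr⟩ T hT hdisj hST
    by_contra hTS
    have hAT : A ∉ T := by
      intro h
      have : A ∈ Fl G S ∩ T := ⟨by rw [hFA]; exact mem_singleton _, h⟩
      rw [hdisj] at this
      exact this
    have hA1 : A ≠ 1 := fun h => hAT (h ▸ hT.2.1)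
    have hAS : A ∉ S := fun h => hAnS ⟨h, hA1⟩
    -- key fact: for B ∈ S with B ≠ 1, B * A ∈ S
    have key : ∀ B ∈ S, B ≠ 1 → B * A ∈ S := by
      intro B hB hB1
      by_contra hBA
      have hmem : B * A ∈ Fl G S := by
        refine ⟨GNat.mul_mem' (hS.1 hB) hAG, fun h => hBA h.1, fun C hC => ?_⟩
        rw [mul_assoc]
        exact hS.2.2.1 B hB _ (hAmul C hC)
      rw [hFA, mem_singleton_iff] at hmem
      have : B * A = 1 * A := by rw [hmem, one_mul]
      exact hB1 (mul_right_cancel this)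
    set T₂ : Set (GLn n) := S ∪ {A} with hT₂def
    have hmulT₂ : ∀ X ∈ T₂, ∀ Y ∈ T₂, X * Y ∈ T₂ := by
      intro X hX Y hY
      simp only [hT₂def, mem_union, mem_singleton_iff] at hX hY ⊢
      rcases hX with hX | hX
      · rcases hY with hY | hY
        · exact Or.inl (hS.2.2.1 X hX Y hY)
        · rw [hY]
          by_cases hX1 : X = 1
          · rw [hX1, one_mul]; exact Or.inr rfl
          · exact Or.inl (key X hX hX1)
      · rw [hX]
        rcases hY with hY | hY
        · by_cases hY1 : Y = 1
          · rw [hY1, mul_one]; exact Or.inr rfl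
          · exact Or.inl (hAmul Y ⟨hS.1 hY, hY1⟩)
        · rw [hY]
          exact Or.inl (hAmul A ⟨hAG, hA1⟩)
    have hT₂UNM : IsUNM G T₂ := by
      refine ⟨?_, Or.inl hS.2.1, hmulT₂, ?_, ?_⟩
      · rintro X (hX | hX)
        · exact hS.1 hX
        · rw [mem_singleton_iff] at hX; rw [hX]; exact hAG
      · exact hS.2.2.2.1.subset (fun X hX => ⟨hX.1, fun h => hX.2 (Or.inl h)⟩)
      · obtain ⟨F, hFcl⟩ := hS.2.2.2.2
        let M : Submonoid (GLn n) :=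
          { carrier := T₂
            mul_mem' := fun {a b} ha hb => hmulT₂ a ha b hb
            one_mem' := Or.inl hS.2.1 }
        refine ⟨insert A F, subset_antisymm ?_ ?_⟩
        · have hle : Submonoid.closure ((insert A F : Finset (GLn n)) : Set (GLn n)) ≤ M := by
            apply Submonoid.closure_le.mpr
            intro x hx
            simp only [Finset.coe_insert, mem_insert_iff] at hx
            rcases hx with rfl | hx
            · exact Or.inr rfl
            · exact Or.inl (hFcl ▸ Submonoid.subset_closure hx)
          exact hle
        · rintro x (hx | hx)
          · rw [← hFcl] at hx
            refine Submonoid.closure_mono ?_ hx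
            rw [Finset.coe_insert]
            exact subset_insert _ _
          · rw [mem_singleton_iff] at hx; rw [hx]
            exact Submonoid.subset_closure (by simp)
    have hST₂ : S ⊂ T₂ := ⟨subset_union_left, fun h => hAS (h (Or.inr rfl))⟩
    have hSTss : S ⊂ T := hST.ssubset_of_ne (fun h => hTS h.symm)
    have hcap : T ∩ T₂ = S := by
      apply subset_antisymm
      · rintro x ⟨hxT, hx | hx⟩
        · exact hx
        · rw [mem_singleton_iff] at hx; rw [hx] at hxT; exact absurd hxT hAT
      · exact fun x hx => ⟨hST hx, Or.inl hx⟩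
    exact hirr ⟨T, T₂, hT, hT₂UNM, hSTss, hST₂, hcap⟩
  · intro hmax
    refine ⟨hS, ?_⟩
    rintro ⟨T₁, T₂, h1, h2, hs1, hs2, hint⟩
    have hGS : A = 1 → False := by
      intro hA1
      have hsub : T₁ ⊆ S := by
        intro B hB
        by_cases hB1 : B = 1
        · subst hB1; exact hS.2.1
        · have := hAmul B ⟨h1.1 hB, hB1⟩
          rwa [hA1, one_mul] at this
      exact hs1.not_subset hsub
    by_cases hA1 : A ∈ T₁
    · by_cases hA2 : A ∈ T₂
      · have hAS : A ∈ S := hint ▸ (show A ∈ T₁ ∩ T₂ from ⟨hA1, hA2⟩)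
        have : A = 1 := by
          by_contra h; exact hAnS ⟨hAS, h⟩
        exact hGS this
      · have := hmax T₂ h2 (by rw [hFA]; exact singleton_inter_eq_empty.mpr hA2) hs2.subset
        exact hs2.ne this.symm
    · have := hmax T₁ h1 (by rw [hFA]; exact singleton_inter_eq_empty.mpr hA1) hs1.subset
      exact hs1.ne this.symm
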